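/- Let λ, δ, k₁, k₂ > 0 and define B_m = (1/m!)·(λ/δ)^m · (k₂/δ)^{(m)} / ((k₁/δ + k₂/δ)^{(m)}) for m ∈ ℕ, where x^{(m)} = x(x+1)⋯(x+m−1) is the rising factorial. Then the alternating series P_n := Σ_{m=n}^∞ (−1)^{m−n} C(m,n) B_m converges absolutely and equals (1/n!)·(λ/δ)^n·(k₂/δ)^{(n)}/((k₁/δ+k₂/δ)^{(n)})·₁F₁(k₂/δ+n, (k₁+k₂)/δ+n; −λ/δ), where ₁F₁(a,b;z) = Σ_{k≥0} (a^{(k)}/b^{(k)})·z^k/k! is the confluent hypergeometric function. -/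
import Mathlib

private lemma asc_split (n k : ℕ) (x : ℝ) :
    (ascPochhammer ℝ (n + k)).eval x =
      (ascPochhammer ℝ n).eval x * (ascPochhammer ℝ k).eval (x + n) := by
  rw [← ascPochhammer_mul]
  simp [Polynomial.eval_comp]

private lemma asc_nonneg (k : ℕ) {x : ℝ} (hx : 0 ≤ x) :
    0 ≤ (ascPochhammer ℝ k).eval x := by
  induction k with
  | zero => simp
  | succ k ih =>
    rw [ascPochhammer_succ_eval]
    have : (0:ℝ) ≤ x + k := by positivity
    exact mul_nonneg ih this

private lemma asc_mono (k : ℕ) {x y : ℝ} (hx : 0 ≤ x) (hxy : x ≤ y) :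
    (ascPochhammer ℝ k).eval x ≤ (ascPochhammer ℝ k).eval y := by
  induction k with
  | zero => simp
  | succ k ih =>
    rw [ascPochhammer_succ_eval, ascPochhammer_succ_eval]
    have hy : 0 ≤ y := hx.trans hxy
    apply mul_le_mul ih (by linarith) (by positivity) ((asc_nonneg k hx).trans ih)

/-- For the Telegraph model, the binomial moments
`B_m = (1/m!)(λ/δ)^m (k₂/δ)^{(m)}/((k₁/δ+k₂/δ)^{(m)})` determine the steady-state
distribution: the alternating inversion series converges absolutely and equals the
confluent hypergeometric expression
`(1/n!)(λ/δ)^n (k₂/δ)^{(n)}/((k₁/δ+k₂/δ)^{(n)}) ₁F₁(k₂/δ+n,(k₁+k₂)/δ+n;−λ/δ)`. -/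
theorem telegraph_distribution
    (lam δ k₁ k₂ : ℝ) (hlam : 0 < lam) (hδ : 0 < δ) (hk₁ : 0 < k₁) (hk₂ : 0 < k₂)
    (B : ℕ → ℝ)
    (hB : ∀ m : ℕ, B m = (1 / (m.factorial : ℝ)) * (lam / δ) ^ m *
      ((ascPochhammer ℝ m).eval (k₂ / δ) /
        (ascPochhammer ℝ m).eval (k₁ / δ + k₂ / δ))) :
    ∀ n : ℕ,
      (Summable fun m : ℕ => (m.choose n : ℝ) * B m) ∧
      (∑' m : ℕ, (-1 : ℝ) ^ (m - n) * (m.choose n : ℝ) * B m)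
        = (1 / (n.factorial : ℝ)) * (lam / δ) ^ n *
            ((ascPochhammer ℝ n).eval (k₂ / δ) /
              (ascPochhammer ℝ n).eval (k₁ / δ + k₂ / δ)) *
            (∑' k : ℕ, ((ascPochhammer ℝ k).eval (k₂ / δ + n) /
                (ascPochhammer ℝ k).eval ((k₁ + k₂) / δ + n)) *
              (-(lam / δ)) ^ k / (k.factorial : ℝ)) := by
  intro n
  set a : ℝ := k₂ / δ with ha_def
  set b : ℝ := k₁ / δ + k₂ / δ with hb_def
  set t : ℝ := lam / δ with ht_def
  have ha : 0 < a := div_pos hk₂ hδ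
  have h0 : 0 < k₁ / δ := div_pos hk₁ hδ
  have hbpos : 0 < b := by rw [hb_def]; linarith
  have hab : a ≤ b := by rw [hb_def, ha_def]; linarith
  have ht : 0 < t := div_pos hlam hδ
  have hbb : (k₁ + k₂) / δ = b := by rw [hb_def, add_div]
  set C : ℝ := (1 / (n.factorial : ℝ)) * t ^ n *
      ((ascPochhammer ℝ n).eval a / (ascPochhammer ℝ n).eval b) with hC_def
  have hgpos : ∀ k : ℕ, 0 < (ascPochhammer ℝ k).eval (a + n) := fun k =>
    ascPochhammer_pos k _ (by positivity)
  have hgbpos : ∀ k : ℕ, 0 < (ascPochhammer ℝ k).eval (b + n) := fun k =>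
    ascPochhammer_pos k _ (by positivity)
  set g : ℕ → ℝ := fun k =>
    (ascPochhammer ℝ k).eval (a + n) / (ascPochhammer ℝ k).eval (b + n) with hg_def
  have hg0 : ∀ k, 0 < g k := fun k => div_pos (hgpos k) (hgbpos k)
  have hg1 : ∀ k, g k ≤ 1 := fun k => by
    rw [hg_def, div_le_one (hgbpos k)]
    exact asc_mono k (by positivity) (by linarith)
  have hCpos : 0 < C := by
    rw [hC_def]
    have h1 := ascPochhammer_pos n a ha
    have h2 := ascPochhammer_pos n b hbpos
    positivity
  -- key pointwise identity
  have key : ∀ k : ℕ, ((n + k).choose n : ℝ) * B (n + k) = C * (g k * t ^ k / k.factorial) := by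
    intro k
    have hchoose : ((n + k).choose n : ℝ) * (n.factorial : ℝ) * (k.factorial : ℝ)
        = ((n + k).factorial : ℝ) := by
      have := Nat.choose_mul_factorial_mul_factorial (Nat.le_add_right n k)
      rw [Nat.add_sub_cancel_left] at this
      exact_mod_cast this
    rw [hB, asc_split, asc_split, hC_def, hg_def, pow_add]
    have hfn : ((n.factorial : ℝ)) ≠ 0 := by positivity
    have hfk : ((k.factorial : ℝ)) ≠ 0 := by positivity
    have hfnk : (((n + k).factorial : ℝ)) ≠ 0 := by positivity
    have h2 := (ascPochhammer_pos n b hbpos).ne'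
    have h3 := (hgbpos k).ne'
    field_simp
    rw [← hchoose]
    ring
  -- support / injectivity data
  have hinj : Function.Injective (fun k : ℕ => n + k) := fun x y h => by
    simpa using h
  have hrange : ∀ m : ℕ, m ∉ Set.range (fun k : ℕ => n + k) → (m.choose n : ℝ) = 0 := by
    intro m hm
    have : m < n := by
      by_contra h
      exact hm ⟨m - n, by show n + (m - n) = m; omega⟩
    simp [Nat.choose_eq_zero_of_lt this]
  -- summability of the absolute series
  have hsum_abs : Summable fun k : ℕ => C * (g k * t ^ k / k.factorial) := by
    apply Summable.of_nonneg_of_le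
      (fun k => by have := (hg0 k).le; positivity)
      (fun k => ?_)
      ((Real.summable_pow_div_factorial t).mul_left C)
    have h1 : g k * t ^ k / k.factorial ≤ t ^ k / k.factorial := by
      apply div_le_div_of_nonneg_right ?_ (by positivity)
      nlinarith [hg1 k, pow_pos ht k]
    have h2 := mul_le_mul_of_nonneg_left h1 hCpos.le
    linarith
  have hsum1 : Summable fun m : ℕ => (m.choose n : ℝ) * B m := by
    rw [← Function.Injective.summable_iff hinj (by
      intro x hx
      simp [hrange x hx])]
    have : ((fun m : ℕ => (m.choose n : ℝ) * B m) ∘ fun k : ℕ => n + k)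
        = fun k : ℕ => C * (g k * t ^ k / k.factorial) := by
      funext k
      simp only [Function.comp_apply]
      exact key k
    rw [this]
    exact hsum_abs
  refine ⟨hsum1, ?_⟩
  -- signed series
  have hF : ∀ k : ℕ, (-1 : ℝ) ^ ((n + k) - n) * ((n + k).choose n : ℝ) * B (n + k)
      = C * (g k * (-t) ^ k / k.factorial) := by
    intro k
    rw [Nat.add_sub_cancel_left, mul_assoc, key k, neg_pow]
    ring
  have hsupp : Function.support (fun m : ℕ => (-1 : ℝ) ^ (m - n) * (m.choose n : ℝ) * B m)
      ⊆ Set.range (fun k : ℕ => n + k) := by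
    intro m hm
    by_contra hr
    apply hm
    simp [hrange m hr]
  rw [← Function.Injective.tsum_eq hinj hsupp]
  have heq : (∑' k : ℕ, (-1 : ℝ) ^ ((n + k) - n) * ((n + k).choose n : ℝ) * B (n + k))
      = C * ∑' k : ℕ, g k * (-t) ^ k / k.factorial := by
    rw [tsum_congr hF, tsum_mul_left]
  rw [heq, hbb]
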